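/- arXiv:2502.16284 — 4 statements merged into one kernel-verified Lean document; each statement's English description precedes it below -/
import Mathlib

section
/- Let n ∈ ℕ, τ > 0, and let ν be a Borel probability measure on ℝⁿ. Define q(x | x₀) = (2πτ²)^(−n/2) · exp(−‖x − x₀‖² / (2τ²)) and p(x) = ∫ q(x | x₀) dν(x₀). Then p is differentiable on ℝⁿ and for every x the vector field x₀ ↦ q(x | x₀) • (x₀ − x)/τ² is ν-integrable, with gradient ∇p(x) = ∫ q(x | x₀) • ((x₀ − x)/τ²) dν(x₀); that is, differentiation under the integral sign holds: ∇p(x) = ∫ ∇ₓ q(x | x₀) dν(x₀). -/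
open Real MeasureTheory

section Aux

open InnerProductSpace

variable {E : Type*} [NormedAddCommGroup E] [InnerProductSpace ℝ E] [CompleteSpace E]

lemma gauss_aux_hasGradientAt (τ c : ℝ) (x₀ x : E) :
    HasGradientAt (fun x' => c * Real.exp (-‖x' - x₀‖ ^ 2 / (2 * τ ^ 2)))
      ((c * Real.exp (-‖x - x₀‖ ^ 2 / (2 * τ ^ 2))) • ((1 / τ ^ 2) • (x₀ - x))) x := by
  rw [hasGradientAt_iff_hasFDerivAt]
  have h0 : HasFDerivAt (fun x' : E => x' - x₀) (ContinuousLinearMap.id ℝ E) x :=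
    (hasFDerivAt_id x).sub_const x₀
  have h1 := h0.inner ℝ h0
  have h2 := ((h1.const_mul (-(1 / (2 * τ ^ 2)))).exp).const_mul c
  have hfun : (fun x' : E => c * Real.exp (-‖x' - x₀‖ ^ 2 / (2 * τ ^ 2))) =
      fun x' => c * Real.exp (-(1 / (2 * τ ^ 2)) * (inner ℝ (x' - x₀) (x' - x₀) : ℝ)) := by
    funext x'
    rw [real_inner_self_eq_norm_sq]
    ring_nf
  rw [hfun]
  convert h2 using 1
  · rfl
  ext y
  simp only [ContinuousLinearMap.smul_apply, ContinuousLinearMap.coe_comp', Function.comp_apply,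
    ContinuousLinearMap.prod_apply, ContinuousLinearMap.coe_id', id_eq, fderivInnerCLM_apply,
    toDual_apply_apply, smul_eq_mul]
  rw [real_inner_smul_left, real_inner_smul_left, real_inner_self_eq_norm_sq,
    real_inner_comm (x - x₀) y]
  have : (inner ℝ (x₀ - x) y : ℝ) = -(inner ℝ (x - x₀) y : ℝ) := by
    rw [← inner_neg_left]; congr 1; abel
  rw [this]
  ring_nf

lemma gauss_aux_bound (τ r : ℝ) (hτ : 0 < τ) (_hr : 0 ≤ r) :
    r * Real.exp (-r ^ 2 / (2 * τ ^ 2)) ≤ τ := by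
  have h1 : r ^ 2 / (2 * τ ^ 2) + 1 ≤ Real.exp (r ^ 2 / (2 * τ ^ 2)) := Real.add_one_le_exp _
  have h2 : Real.exp (-r ^ 2 / (2 * τ ^ 2)) = (Real.exp (r ^ 2 / (2 * τ ^ 2)))⁻¹ := by
    rw [← Real.exp_neg]; ring_nf
  rw [h2]
  have hpos : (0:ℝ) < Real.exp (r ^ 2 / (2 * τ ^ 2)) := Real.exp_pos _
  rw [mul_inv_le_iff₀ hpos]
  calc r ≤ τ * (r ^ 2 / (2 * τ ^ 2) + 1) := by
        rw [mul_add, mul_one]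
        have : τ * (r ^ 2 / (2 * τ ^ 2)) = r ^ 2 / (2 * τ) := by
          field_simp
        rw [this]
        have h3 : 0 ≤ (τ - r) ^ 2 + τ ^ 2 := by positivity
        rw [div_add' _ _ _ (by positivity), le_div_iff₀ (by positivity)]
        nlinarith
    _ ≤ τ * Real.exp (r ^ 2 / (2 * τ ^ 2)) := by
        apply mul_le_mul_of_nonneg_left h1 hτ.le

end Aux

/-- **Differentiation under the integral sign for the Gaussian mixture density.**
For `τ > 0` and a Borel probability measure `ν` on `ℝⁿ`, the mixture density
`p x = ∫ q(x | x₀) dν(x₀)` with `q(x | x₀) = (2πτ²)^(−n/2) · exp(−‖x − x₀‖²/(2τ²))`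
is differentiable everywhere; at every `x` the vector field
`x₀ ↦ q(x | x₀) • (x₀ − x)/τ²` (which is the gradient in `x` of `q(· | x₀)`)
is `ν`-integrable, and `∇p(x) = ∫ q(x | x₀) • ((x₀ − x)/τ²) dν(x₀)
= ∫ ∇ₓ q(x | x₀) dν(x₀)`. -/
theorem gaussian_mixture_density_gradient_under_integral
    (n : ℕ) (τ : ℝ) (hτ : 0 < τ)
    (ν : Measure (EuclideanSpace ℝ (Fin n))) [IsProbabilityMeasure ν]
    (q : EuclideanSpace ℝ (Fin n) → EuclideanSpace ℝ (Fin n) → ℝ)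
    (hq : ∀ x x₀, q x x₀ = (2 * π * τ ^ 2) ^ (-(n : ℝ) / 2) *
      Real.exp (-‖x - x₀‖ ^ 2 / (2 * τ ^ 2)))
    (p : EuclideanSpace ℝ (Fin n) → ℝ)
    (hp : ∀ x, p x = ∫ x₀, q x x₀ ∂ν) :
    (∀ x, DifferentiableAt ℝ p x) ∧
    (∀ x, Integrable (fun x₀ => q x x₀ • ((1 / τ ^ 2) • (x₀ - x))) ν) ∧
    (∀ x, gradient p x = ∫ x₀, q x x₀ • ((1 / τ ^ 2) • (x₀ - x)) ∂ν) ∧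
    (∀ x, gradient p x = ∫ x₀, gradient (fun x' => q x' x₀) x ∂ν) := by
  have hE : True := trivial
  set c : ℝ := (2 * π * τ ^ 2) ^ (-(n : ℝ) / 2) with hc
  have hcpos : 0 < c := Real.rpow_pos_of_pos (by positivity) _
  set g : EuclideanSpace ℝ (Fin n) → EuclideanSpace ℝ (Fin n) → EuclideanSpace ℝ (Fin n) := fun x x₀ => q x x₀ • ((1 / τ ^ 2) • (x₀ - x)) with hg
  -- gradient of q(· | x₀)
  have hgrad : ∀ x x₀ : EuclideanSpace ℝ (Fin n), HasGradientAt (fun x' => q x' x₀) (g x x₀) x := by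
    intro x x₀
    have : (fun x' : EuclideanSpace ℝ (Fin n) => q x' x₀) =
        fun x' => c * Real.exp (-‖x' - x₀‖ ^ 2 / (2 * τ ^ 2)) := by
      funext x'; rw [hq]
    rw [this, hg]
    simp only [hq x x₀]
    exact gauss_aux_hasGradientAt τ c x₀ x
  -- bounds
  have hq_nonneg : ∀ x x₀ : EuclideanSpace ℝ (Fin n), 0 ≤ q x x₀ := by
    intro x x₀; rw [hq]; positivity
  have hq_le : ∀ x x₀ : EuclideanSpace ℝ (Fin n), q x x₀ ≤ c := by
    intro x x₀
    rw [hq]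
    have : Real.exp (-‖x - x₀‖ ^ 2 / (2 * τ ^ 2)) ≤ 1 := by
      apply Real.exp_le_one_iff.mpr
      rw [neg_div]
      exact neg_nonpos.mpr (by positivity)
    nlinarith
  have hg_bound : ∀ x x₀ : EuclideanSpace ℝ (Fin n), ‖g x x₀‖ ≤ c / τ := by
    intro x x₀
    show ‖q x x₀ • ((1 / τ ^ 2) • (x₀ - x))‖ ≤ c / τ
    rw [norm_smul, norm_smul, Real.norm_eq_abs, Real.norm_eq_abs,
      abs_of_nonneg (hq_nonneg x x₀), abs_of_nonneg (by positivity : (0:ℝ) ≤ 1 / τ ^ 2)]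
    rw [hq]
    have key : ‖x₀ - x‖ * Real.exp (-‖x₀ - x‖ ^ 2 / (2 * τ ^ 2)) ≤ τ :=
      gauss_aux_bound τ _ hτ (norm_nonneg _)
    have hnorm : ‖x - x₀‖ = ‖x₀ - x‖ := norm_sub_rev _ _
    rw [hnorm]
    calc c * Real.exp (-‖x₀ - x‖ ^ 2 / (2 * τ ^ 2)) * (1 / τ ^ 2 * ‖x₀ - x‖)
        = c / τ ^ 2 * (‖x₀ - x‖ * Real.exp (-‖x₀ - x‖ ^ 2 / (2 * τ ^ 2))) := by ring
      _ ≤ c / τ ^ 2 * τ := by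
          apply mul_le_mul_of_nonneg_left key (by positivity)
      _ = c / τ := by field_simp
  -- continuity / measurability in x₀
  have hq_cont : ∀ x : EuclideanSpace ℝ (Fin n), Continuous (fun x₀ => q x x₀) := by
    intro x
    have : (fun x₀ : EuclideanSpace ℝ (Fin n) => q x x₀) =
        fun x₀ => c * Real.exp (-‖x - x₀‖ ^ 2 / (2 * τ ^ 2)) := by
      funext x₀; rw [hq]
    rw [this]
    fun_prop
  have hg_cont : ∀ x : EuclideanSpace ℝ (Fin n), Continuous (fun x₀ => g x x₀) := by
    intro x
    rw [hg]
    exact (hq_cont x).smul (by fun_prop)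
  have hq_int : ∀ x : EuclideanSpace ℝ (Fin n), Integrable (fun x₀ => q x x₀) ν := by
    intro x
    refine Integrable.mono' (integrable_const c) (hq_cont x).aestronglyMeasurable ?_
    filter_upwards with x₀
    rw [Real.norm_eq_abs, abs_of_nonneg (hq_nonneg x x₀)]
    exact hq_le x x₀
  have hg_int : ∀ x : EuclideanSpace ℝ (Fin n), Integrable (fun x₀ => g x x₀) ν := by
    intro x
    refine Integrable.mono' (integrable_const (c / τ)) (hg_cont x).aestronglyMeasurable ?_
    filter_upwards with x₀
    exact hg_bound x x₀
  -- differentiation under integral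
  have hmain : ∀ x : EuclideanSpace ℝ (Fin n), HasGradientAt p (∫ x₀, g x x₀ ∂ν) x := by
    intro x
    set F' : EuclideanSpace ℝ (Fin n) → EuclideanSpace ℝ (Fin n) →
        (EuclideanSpace ℝ (Fin n) →L[ℝ] ℝ) :=
      fun x' x₀ => ((InnerProductSpace.toDual ℝ (EuclideanSpace ℝ (Fin n))) (g x' x₀) :
        EuclideanSpace ℝ (Fin n) →L[ℝ] ℝ) with hF'
    have key : HasFDerivAt (fun x' => ∫ x₀, q x' x₀ ∂ν) (∫ x₀, F' x x₀ ∂ν) x := by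
      apply hasFDerivAt_integral_of_dominated_of_fderiv_le (s := Metric.ball x 1) (F' := F')
        (bound := fun _ => c / τ) (Metric.ball_mem_nhds x one_pos)
      · filter_upwards with x' using (hq_cont x').aestronglyMeasurable
      · exact hq_int x
      · exact ((InnerProductSpace.toDual ℝ
          (EuclideanSpace ℝ (Fin n))).continuous.comp (hg_cont x)).aestronglyMeasurable
      · filter_upwards with x₀ x' _
        show ‖((InnerProductSpace.toDual ℝ (EuclideanSpace ℝ (Fin n))) (g x' x₀) :
          EuclideanSpace ℝ (Fin n) →L[ℝ] ℝ)‖ ≤ c / τ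
        rw [LinearIsometryEquiv.norm_map]
        exact hg_bound x' x₀
      · exact integrable_const _
      · filter_upwards with x₀ x' _
        exact ((hgrad x' x₀).hasFDerivAt : _)
    have hcomm : ∫ x₀, F' x x₀ ∂ν =
        ((InnerProductSpace.toDual ℝ (EuclideanSpace ℝ (Fin n))) (∫ x₀, g x x₀ ∂ν) :
          EuclideanSpace ℝ (Fin n) →L[ℝ] ℝ) :=
      (InnerProductSpace.toDual ℝ (EuclideanSpace ℝ (Fin n))).toLinearIsometry.integral_comp_comm _
    rw [hcomm] at key
    rw [hasGradientAt_iff_hasFDerivAt]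
    have hpfun : p = fun x' => ∫ x₀, q x' x₀ ∂ν := funext hp
    rw [hpfun]
    exact key
  refine ⟨fun x => (hmain x).differentiableAt, hg_int, fun x => (hmain x).gradient, ?_⟩
  intro x
  rw [(hmain x).gradient]
  congr 1
  funext x₀
  exact ((hgrad x x₀).gradient).symm
end

section
/- Let n ∈ ℕ, τ > 0, and let ν be a Borel probability measure on ℝⁿ. Define q(x | x₀) = (2πτ²)^(−n/2) · exp(−‖x − x₀‖² / (2τ²)) and p(x) = ∫ q(x | x₀) dν(x₀). Then for every x ∈ ℝⁿ, the score of the mixture satisfies the Tweedie-type identity ∇(log p)(x) = (1 / (τ² · p(x))) • ∫ (x₀ − x) · q(x | x₀) dν(x₀); i.e., τ² ∇ log p(x) equals the posterior mean of x₀ − x given the noisy observation x, so the marginal score is the posterior average of the conditional scores ∇ₓ log q(x | x₀). -/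
open Real MeasureTheory

variable {n : ℕ}

local notation "H" => EuclideanSpace ℝ (Fin n)

-- pointwise gradient of the Gaussian kernel
lemma gauss_hasFDerivAt (C τ : ℝ) (x₀ x : H) (hτ : τ ≠ 0) :
    HasFDerivAt (fun x' : H => C * Real.exp (-‖x' - x₀‖ ^ 2 / (2 * τ ^ 2)))
      ((InnerProductSpace.toDual ℝ H)
        ((τ ^ 2)⁻¹ • ((C * Real.exp (-‖x - x₀‖ ^ 2 / (2 * τ ^ 2))) • (x₀ - x)))) x := by
  have h1 : HasFDerivAt (fun x' : H => x' - x₀) (ContinuousLinearMap.id ℝ H) x :=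
    (hasFDerivAt_id x).sub_const x₀
  have h2 := (h1.inner ℝ h1)
  have hsq : HasFDerivAt (fun x' : H => ‖x' - x₀‖ ^ 2)
      ((fderivInnerCLM ℝ (x - x₀, x - x₀)).comp
        ((ContinuousLinearMap.id ℝ H).prod (ContinuousLinearMap.id ℝ H))) x := by
    have hfun : (fun x' : H => ‖x' - x₀‖ ^ 2) = fun t => inner ℝ (t - x₀) (t - x₀) := by
      funext x'; rw [real_inner_self_eq_norm_sq]
    rw [hfun]; exact h2
  have hg : HasDerivAt (fun y : ℝ => C * Real.exp (-y / (2 * τ ^ 2)))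
      (C * Real.exp (-‖x - x₀‖ ^ 2 / (2 * τ ^ 2)) * (-(2 * τ ^ 2)⁻¹)) (‖x - x₀‖ ^ 2) := by
    have : HasDerivAt (fun y : ℝ => -y / (2 * τ ^ 2)) (-(2 * τ ^ 2)⁻¹) (‖x - x₀‖ ^ 2) := by
      have := ((hasDerivAt_id (‖x - x₀‖ ^ 2)).div_const (2 * τ ^ 2)).neg
      have e : (fun y : ℝ => -y / (2 * τ ^ 2)) = -fun x => id x / (2 * τ ^ 2) := by
        funext y; simp only [Pi.neg_apply, id_eq]; ring
      rw [e, inv_eq_one_div]; exact this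
    have := (this.exp).const_mul C
    exact this.congr_deriv (by ring)
  have := hg.comp_hasFDerivAt x hsq
  refine this.congr_fderiv ?_
  ext v
  simp [fderivInnerCLM_apply, InnerProductSpace.toDual_apply_apply, real_inner_smul_left,
    inner_sub_left, inner_sub_right, real_inner_comm x₀ v]
  rw [real_inner_comm x v]
  ring

lemma texp_le (τ t : ℝ) (hτ : 0 < τ) (ht : 0 ≤ t) :
    t * Real.exp (-t ^ 2 / (2 * τ ^ 2)) ≤ τ := by
  have hs : (0:ℝ) < Real.exp (t ^ 2 / (2 * τ ^ 2)) := Real.exp_pos _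
  have hrw : -t ^ 2 / (2 * τ ^ 2) = -(t ^ 2 / (2 * τ ^ 2)) := by ring
  rw [hrw, Real.exp_neg, ← div_eq_mul_inv, div_le_iff₀ hs]
  calc t ≤ (t ^ 2 + 2 * τ ^ 2) / (2 * τ) := by
        rw [le_div_iff₀ (by positivity)]
        nlinarith [sq_nonneg (t - τ)]
    _ = τ * (t ^ 2 / (2 * τ ^ 2) + 1) := by field_simp
    _ ≤ τ * Real.exp (t ^ 2 / (2 * τ ^ 2)) := by
        have := Real.add_one_le_exp (t ^ 2 / (2 * τ ^ 2))
        exact mul_le_mul_of_nonneg_left this hτ.le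

set_option maxHeartbeats 1000000 in

/-- **Tweedie-type identity for the score of a Gaussian mixture.**
For `τ > 0` and a Borel probability measure `ν` on `ℝⁿ`, with
`q(x | x₀) = (2πτ²)^(−n/2) · exp(−‖x − x₀‖²/(2τ²))` and
`p x = ∫ q(x | x₀) dν(x₀)`, the score of the mixture satisfies
`∇(log p)(x) = (1/(τ² p(x))) • ∫ q(x | x₀) • (x₀ − x) dν(x₀)`.
Equivalently, `τ² ∇ log p(x)` is the posterior mean of `x₀ − x` given `x`,
i.e. the marginal score is the posterior average of the conditional scores
`∇ₓ log q(x | x₀) = (x₀ − x)/τ²`. -/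
theorem gaussian_mixture_score_tweedie
    (n : ℕ) (τ : ℝ) (hτ : 0 < τ)
    (ν : Measure (EuclideanSpace ℝ (Fin n))) [IsProbabilityMeasure ν]
    (q : EuclideanSpace ℝ (Fin n) → EuclideanSpace ℝ (Fin n) → ℝ)
    (hq : ∀ x x₀, q x x₀ = (2 * π * τ ^ 2) ^ (-(n : ℝ) / 2) *
      Real.exp (-‖x - x₀‖ ^ 2 / (2 * τ ^ 2)))
    (p : EuclideanSpace ℝ (Fin n) → ℝ)
    (hp : ∀ x, p x = ∫ x₀, q x x₀ ∂ν) :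
    ∀ x, gradient (fun x' => Real.log (p x')) x =
      (1 / (τ ^ 2 * p x)) • ∫ x₀, q x x₀ • (x₀ - x) ∂ν := by
  intro x
  set C : ℝ := (2 * π * τ ^ 2) ^ (-(n : ℝ) / 2) with hCdef
  have hCpos : 0 < C := Real.rpow_pos_of_pos (by positivity) _
  have hτ2 : (0:ℝ) < τ ^ 2 := by positivity
  have hqpos : ∀ y x₀ : EuclideanSpace ℝ (Fin n), 0 < q y x₀ := fun y x₀ => by
    rw [hq]; positivity
  have hqle : ∀ y x₀ : EuclideanSpace ℝ (Fin n), q y x₀ ≤ C := fun y x₀ => by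
    rw [hq]
    have h1 : Real.exp (-‖y - x₀‖ ^ 2 / (2 * τ ^ 2)) ≤ 1 := by
      rw [Real.exp_le_one_iff]
      have : (0:ℝ) ≤ ‖y - x₀‖ ^ 2 := by positivity
      rw [neg_div]
      simp only [neg_nonpos]
      positivity
    nlinarith
  have hqcont : ∀ y : EuclideanSpace ℝ (Fin n), Continuous (fun x₀ : EuclideanSpace ℝ (Fin n) => q y x₀) := fun y => by
    simp only [hq]
    exact continuous_const.mul (Real.continuous_exp.comp (by fun_prop))
  have hint : ∀ y : EuclideanSpace ℝ (Fin n), Integrable (fun x₀ => q y x₀) ν := fun y =>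
    (integrable_const C).mono' (hqcont y).aestronglyMeasurable
      (ae_of_all _ fun x₀ => by
        rw [Real.norm_of_nonneg (hqpos y x₀).le]; exact hqle y x₀)
  have hppos : 0 < p x := by
    rw [hp, integral_pos_iff_support_of_nonneg (fun x₀ => (hqpos x x₀).le) (hint x)]
    have hs : Function.support (fun x₀ : EuclideanSpace ℝ (Fin n) => q x x₀) = Set.univ :=
      Set.eq_univ_of_forall fun x₀ => (hqpos x x₀).ne'
    rw [hs]
    simp
  set G : EuclideanSpace ℝ (Fin n) → EuclideanSpace ℝ (Fin n) → EuclideanSpace ℝ (Fin n) := fun y x₀ => (τ ^ 2)⁻¹ • (q y x₀ • (x₀ - y)) with hGdef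
  have hderiv : ∀ (x₀ y : EuclideanSpace ℝ (Fin n)), HasFDerivAt (fun y' => q y' x₀)
      (InnerProductSpace.toDual ℝ (EuclideanSpace ℝ (Fin n)) (G y x₀)) y := by
    intro x₀ y
    simp only [hGdef, hq]
    exact gauss_hasFDerivAt C τ x₀ y hτ.ne'
  have hGcont : Continuous (fun x₀ : EuclideanSpace ℝ (Fin n) => G x x₀) := by
    refine Continuous.const_smul (g := fun x₀ => q x x₀ • (x₀ - x)) ?_ ((τ ^ 2)⁻¹)
    exact (hqcont x).smul (continuous_id.sub continuous_const)
  have key : HasFDerivAt (fun y : EuclideanSpace ℝ (Fin n) => ∫ x₀, q y x₀ ∂ν)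
      (∫ x₀, InnerProductSpace.toDual ℝ (EuclideanSpace ℝ (Fin n)) (G x x₀) ∂ν) x := by
    apply hasFDerivAt_integral_of_dominated_of_fderiv_le (bound := fun _ => C / τ)
      (F' := fun y x₀ => InnerProductSpace.toDual ℝ (EuclideanSpace ℝ (Fin n)) (G y x₀)) (Metric.ball_mem_nhds x one_pos)
    · exact Filter.Eventually.of_forall fun y => (hqcont y).aestronglyMeasurable
    · exact hint x
    · exact ((InnerProductSpace.toDual ℝ (EuclideanSpace ℝ (Fin n))).continuous.comp hGcont).aestronglyMeasurable
    · refine ae_of_all _ fun x₀ y _ => ?_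
      rw [LinearIsometryEquiv.norm_map]
      simp only [hGdef]
      rw [norm_smul, norm_smul, Real.norm_of_nonneg (hqpos y x₀).le,
        Real.norm_of_nonneg (inv_nonneg.mpr hτ2.le)]
      have h1 : q y x₀ * ‖x₀ - y‖ ≤ C * τ := by
        rw [hq, norm_sub_rev x₀ y]
        have := texp_le τ ‖y - x₀‖ hτ (norm_nonneg _)
        calc C * Real.exp (-‖y - x₀‖ ^ 2 / (2 * τ ^ 2)) * ‖y - x₀‖
            = C * (‖y - x₀‖ * Real.exp (-‖y - x₀‖ ^ 2 / (2 * τ ^ 2))) := by ring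
          _ ≤ C * τ := mul_le_mul_of_nonneg_left this hCpos.le
      calc (τ ^ 2)⁻¹ * (q y x₀ * ‖x₀ - y‖) ≤ (τ ^ 2)⁻¹ * (C * τ) :=
            mul_le_mul_of_nonneg_left h1 (inv_nonneg.mpr hτ2.le)
        _ = C / τ := by field_simp
    · exact integrable_const _
    · exact ae_of_all _ fun x₀ y _ => hderiv x₀ y
  have hcomm : ∫ x₀, InnerProductSpace.toDual ℝ (EuclideanSpace ℝ (Fin n)) (G x x₀) ∂ν
      = InnerProductSpace.toDual ℝ (EuclideanSpace ℝ (Fin n)) (∫ x₀, G x x₀ ∂ν) :=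
    (InnerProductSpace.toDual ℝ (EuclideanSpace ℝ (Fin n))).toLinearIsometry.integral_comp_comm _
  have hgrad : HasGradientAt p (∫ x₀, G x x₀ ∂ν) x := by
    rw [hasGradientAt_iff_hasFDerivAt]
    rw [hcomm] at key
    rwa [show p = fun y => ∫ x₀, q y x₀ ∂ν from funext hp]
  have hlog : HasGradientAt (fun y => Real.log (p y))
      ((p x)⁻¹ • ∫ x₀, G x x₀ ∂ν) x := by
    rw [hasGradientAt_iff_hasFDerivAt] at hgrad ⊢
    have hd := (Real.hasDerivAt_log hppos.ne').comp_hasFDerivAt x hgrad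
    refine hd.congr_fderiv ?_
    exact (_root_.map_smul (InnerProductSpace.toDual ℝ (EuclideanSpace ℝ (Fin n))) _ _).symm
  rw [hlog.gradient]
  have hsplit : ∫ x₀, G x x₀ ∂ν = (τ ^ 2)⁻¹ • ∫ x₀, q x x₀ • (x₀ - x) ∂ν := by
    simp only [hGdef]
    exact integral_smul _ _
  rw [hsplit, smul_smul]
  congr 1
  rw [one_div, mul_inv]
  ring
end

section
/- (Conditional score matching identity of Vincent, used to prove the denoising–force-field equivalence.) Let n, m ∈ ℕ, let ν be a Borel probability measure on ℝᵐ, and let q : ℝⁿ × ℝᵐ → ℝ be measurable with q(x, y) > 0 for all (x, y), such that for ν-a.e. y the map x ↦ q(x, y) is a probability density on ℝⁿ differentiable in x. Define p(x) = ∫ q(x, y) dν(y) and assume: (i) p(x) > 0 and p is differentiable with ∇p(x) = ∫ ∇ₓ q(x, y) dν(y) for all x; (ii) the score second moments ∫ ‖∇ log p(x)‖² p(x) dx and ∫∫ ‖∇ₓ log q(x, y)‖² q(x, y) dν(y) dx (with respect to Lebesgue measure in x) are finite. Then for every measurable f : ℝⁿ → ℝⁿ with ∫ ‖f(x)‖²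 p(x) dx < ∞ (and the required joint integrability), ∫ ‖f(x) − ∇ log p(x)‖² p(x) dx = ∫∫ ‖f(x) − ∇ₓ log q(x, y)‖² q(x, y) dν(y) dx + C, where C = ∫ ‖∇ log p(x)‖² p(x) dx − ∫∫ ‖∇ₓ log q(x, y)‖² q(x, y) dν(y) dx does not depend on f. -/
open Real MeasureTheory
open scoped RealInnerProductSpace

variable {n : ℕ}

lemma gradient_log_comp {g : EuclideanSpace ℝ (Fin n) → ℝ} {x}
    (hg : DifferentiableAt ℝ g x) (hpos : 0 < g x) :
    gradient (fun x' => Real.log (g x')) x = (g x)⁻¹ • gradient g x := by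
  have h1 : HasFDerivAt (fun x' => Real.log (g x')) ((g x)⁻¹ • fderiv ℝ g x) x :=
    (Real.hasDerivAt_log hpos.ne').comp_hasFDerivAt x hg.hasFDerivAt
  rw [gradient, h1.fderiv, _root_.map_smul, gradient]

lemma measurable_gradient' (g : EuclideanSpace ℝ (Fin n) → ℝ) :
    Measurable (fun x => gradient g x) :=
  ((InnerProductSpace.toDual ℝ _).symm.continuous.measurable).comp (measurable_fderiv ℝ g)

lemma gradient_repr (g : EuclideanSpace ℝ (Fin n) → ℝ) (x : EuclideanSpace ℝ (Fin n)) :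
    gradient g x = ∑ i, (fderiv ℝ g x (EuclideanSpace.single i 1)) • EuclideanSpace.single i 1 := by
  conv_lhs => rw [← (EuclideanSpace.basisFun (Fin n) ℝ).sum_repr' (gradient g x)]
  refine Finset.sum_congr rfl fun i _ => ?_
  rw [EuclideanSpace.basisFun_apply, real_inner_comm, gradient,
    InnerProductSpace.toDual_symm_apply]

lemma aemeas_gradient_param {m : ℕ} (ν : Measure (EuclideanSpace ℝ (Fin m)))
    (q : EuclideanSpace ℝ (Fin n) → EuclideanSpace ℝ (Fin m) → ℝ)
    (hq_meas : Measurable (Function.uncurry q))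
    (x : EuclideanSpace ℝ (Fin n))
    (hdiff : ∀ᵐ y ∂ν, DifferentiableAt ℝ (fun x' => q x' y) x) :
    AEStronglyMeasurable (fun y => gradient (fun x' => q x' y) x) ν := by
  have hD : ∀ i : Fin n, AEMeasurable
      (fun y => fderiv ℝ (fun x' => q x' y) x (EuclideanSpace.single i 1)) ν := by
    intro i
    set v : EuclideanSpace ℝ (Fin n) := EuclideanSpace.single i 1 with hv
    refine aemeasurable_of_tendsto_metrizable_ae (u := Filter.atTop)
      (f := fun (k : ℕ) (y : EuclideanSpace ℝ (Fin m)) =>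
        (q (x + ((k : ℝ) + 1)⁻¹ • v) y - q x y) * ((k : ℝ) + 1)) ?_ ?_
    · intro k
      exact (((hq_meas.comp measurable_prodMk_left).sub
        (hq_meas.comp measurable_prodMk_left)).mul_const _).aemeasurable
    · filter_upwards [hdiff] with y hy
      have hline : HasDerivAt (fun t : ℝ => x + t • v) v 0 := by
        simpa using ((hasDerivAt_id (0 : ℝ)).smul_const v).const_add x
      have hx0 : x + (0 : ℝ) • v = x := by simp
      have hφ : HasDerivAt (fun t : ℝ => q (x + t • v) y)
          (fderiv ℝ (fun x' => q x' y) x v) 0 := by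
        have := (hx0 ▸ hy.hasFDerivAt).comp_hasDerivAt 0 hline
        rw [hx0] at this
        exact this
      have hslope := hasDerivAt_iff_tendsto_slope.mp hφ
      have hseq : Filter.Tendsto (fun k : ℕ => ((k : ℝ) + 1)⁻¹) Filter.atTop (nhdsWithin 0 {(0:ℝ)}ᶜ) := by
        refine tendsto_nhdsWithin_of_tendsto_nhds_of_eventually_within _ ?_ ?_
        · simpa [one_div] using (tendsto_one_div_add_atTop_nhds_zero_nat :
            Filter.Tendsto (fun k : ℕ => 1 / ((k : ℝ) + 1)) Filter.atTop (nhds 0))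
        · exact Filter.Eventually.of_forall fun k => by
            simp only [Set.mem_compl_iff, Set.mem_singleton_iff]
            positivity
      have := hslope.comp hseq
      refine this.congr fun k => ?_
      have hk : ((k : ℝ) + 1) ≠ 0 := by positivity
      simp only [Function.comp_apply, slope_def_field]
      rw [hx0]
      field_simp
      ring
  have hrepr : (fun y => gradient (fun x' => q x' y) x) =
      fun y => ∑ i, (fderiv ℝ (fun x' => q x' y) x (EuclideanSpace.single i 1)) •
        (EuclideanSpace.single i 1 : EuclideanSpace ℝ (Fin n)) := by
    funext y; exact gradient_repr _ x
  rw [hrepr]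
  exact (Finset.aemeasurable_fun_sum _ fun i _ => (hD i).smul_const _).aestronglyMeasurable

/-- **Conditional score matching identity (Vincent).**
Let `ν` be a Borel probability measure on `ℝᵐ` and `q : ℝⁿ × ℝᵐ → ℝ` a measurable,
everywhere positive kernel such that for `ν`-a.e. `y` the map `x ↦ q x y` is a
probability density on `ℝⁿ` differentiable in `x`. Let `p x = ∫ q x y dν(y)`, and
assume `p` is everywhere positive, differentiable, with
`∇p(x) = ∫ ∇ₓ q(x, y) dν(y)`, and that the score second moments
`∫ ‖∇ log p‖² p dx` and `∫∫ ‖∇ₓ log q‖² q dν dx` are finite. Then for every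
measurable `f : ℝⁿ → ℝⁿ` with `∫ ‖f‖² p dx < ∞` (and the required joint
integrability),
`∫ ‖f − ∇ log p‖² p dx = ∫∫ ‖f − ∇ₓ log q‖² q dν dx + C`
where `C = ∫ ‖∇ log p‖² p dx − ∫∫ ‖∇ₓ log q‖² q dν dx` does not depend on `f`. -/
theorem vincent_conditional_score_matching
    (n m : ℕ)
    (ν : Measure (EuclideanSpace ℝ (Fin m))) [IsProbabilityMeasure ν]
    (q : EuclideanSpace ℝ (Fin n) → EuclideanSpace ℝ (Fin m) → ℝ)
    (hq_meas : Measurable (Function.uncurry q))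
    (hq_pos : ∀ x y, 0 < q x y)
    (hq_density : ∀ᵐ y ∂ν, (∫ x, q x y = 1) ∧ ∀ x, DifferentiableAt ℝ (fun x' => q x' y) x)
    (p : EuclideanSpace ℝ (Fin n) → ℝ)
    (hp : ∀ x, p x = ∫ y, q x y ∂ν)
    (hp_pos : ∀ x, 0 < p x)
    (hp_diff : ∀ x, DifferentiableAt ℝ p x)
    (hp_grad : ∀ x, gradient p x = ∫ y, gradient (fun x' => q x' y) x ∂ν)
    (hmom_p : Integrable (fun x => ‖gradient (fun x' => Real.log (p x')) x‖ ^ 2 * p x) volume)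
    (hmom_q : Integrable (fun xy : EuclideanSpace ℝ (Fin n) × EuclideanSpace ℝ (Fin m) =>
      ‖gradient (fun x' => Real.log (q x' xy.2)) xy.1‖ ^ 2 * q xy.1 xy.2) (volume.prod ν))
    (f : EuclideanSpace ℝ (Fin n) → EuclideanSpace ℝ (Fin n))
    (hf_meas : Measurable f)
    (hf_mom : Integrable (fun x => ‖f x‖ ^ 2 * p x) volume)
    (hf_joint : Integrable (fun xy : EuclideanSpace ℝ (Fin n) × EuclideanSpace ℝ (Fin m) =>
      ‖f xy.1 - gradient (fun x' => Real.log (q x' xy.2)) xy.1‖ ^ 2 * q xy.1 xy.2)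
      (volume.prod ν)) :
    ∫ x, ‖f x - gradient (fun x' => Real.log (p x')) x‖ ^ 2 * p x =
      (∫ x, ∫ y, ‖f x - gradient (fun x' => Real.log (q x' y)) x‖ ^ 2 * q x y ∂ν) +
      ((∫ x, ‖gradient (fun x' => Real.log (p x')) x‖ ^ 2 * p x) -
       (∫ x, ∫ y, ‖gradient (fun x' => Real.log (q x' y)) x‖ ^ 2 * q x y ∂ν)) := by
  classical
  set sp : EuclideanSpace ℝ (Fin n) → EuclideanSpace ℝ (Fin n) :=
    fun x => gradient (fun x' => Real.log (p x')) x with hsp_def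
  set sq : EuclideanSpace ℝ (Fin n) → EuclideanSpace ℝ (Fin m) → EuclideanSpace ℝ (Fin n) :=
    fun x y => gradient (fun x' => Real.log (q x' y)) x with hsq_def
  have hp_cont : Continuous p := continuous_iff_continuousAt.mpr fun x => (hp_diff x).continuousAt
  have hq_int : ∀ x, Integrable (fun y => q x y) ν := by
    intro x
    by_contra h
    exact (hp_pos x).ne' ((hp x).trans (integral_undef h))
  have hsp_meas : Measurable sp := measurable_gradient' (fun x' => Real.log (p x'))
  -- p-side cross term integrability
  have cross_p : Integrable (fun x => (inner ℝ (f x) (sp x) : ℝ) * p x) volume := by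
    have hbd : Integrable (fun x => (1/2 : ℝ) * (‖f x‖ ^ 2 * p x
        + ‖gradient (fun x' => Real.log (p x')) x‖ ^ 2 * p x)) volume :=
      (hf_mom.add hmom_p).const_mul _
    refine Integrable.mono' hbd ?_ ?_
    · exact ((hf_meas.inner hsp_meas).mul hp_cont.measurable).aestronglyMeasurable
    · refine Filter.Eventually.of_forall fun x => ?_
      rw [Real.norm_eq_abs, abs_mul, abs_of_nonneg (hp_pos x).le]
      have h1 := abs_real_inner_le_norm (f x) (sp x)
      have h2 := sq_nonneg (‖f x‖ - ‖sp x‖)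
      have h3 := (hp_pos x).le
      have h4 := abs_nonneg (inner ℝ (f x) (sp x) : ℝ)
      nlinarith
  -- expansion of the LHS integral
  have expand_p : ∫ x, ‖f x - sp x‖ ^ 2 * p x =
      (∫ x, ‖f x‖ ^ 2 * p x) - 2 * (∫ x, (inner ℝ (f x) (sp x) : ℝ) * p x)
        + ∫ x, ‖sp x‖ ^ 2 * p x := by
    have hpt : (fun x => ‖f x - sp x‖ ^ 2 * p x) =
        fun x => (‖f x‖ ^ 2 * p x - 2 * ((inner ℝ (f x) (sp x) : ℝ) * p x))
          + ‖sp x‖ ^ 2 * p x := by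
      funext x; rw [@norm_sub_sq_real]; ring
    have hI2 : Integrable (fun x => 2 * ((inner ℝ (f x) (sp x) : ℝ) * p x)) volume :=
      cross_p.const_mul 2
    have hIsub : Integrable
        (fun x => ‖f x‖ ^ 2 * p x - 2 * ((inner ℝ (f x) (sp x) : ℝ) * p x)) volume :=
      hf_mom.sub hI2
    rw [hpt, integral_add hIsub hmom_p, integral_sub hf_mom hI2, integral_const_mul]
  -- joint integrability pieces
  have hmeasQf : Measurable fun z : EuclideanSpace ℝ (Fin n) × EuclideanSpace ℝ (Fin m) =>
      ‖f z.1‖ ^ 2 * q z.1 z.2 :=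
    (((hf_meas.comp measurable_fst).norm.pow_const 2)).mul hq_meas
  have hQf : Integrable (fun z : EuclideanSpace ℝ (Fin n) × EuclideanSpace ℝ (Fin m) =>
      ‖f z.1‖ ^ 2 * q z.1 z.2) (volume.prod ν) := by
    refine (integrable_prod_iff hmeasQf.aestronglyMeasurable).mpr ⟨?_, ?_⟩
    · exact Filter.Eventually.of_forall fun x => ((hq_int x).const_mul (‖f x‖ ^ 2))
    · refine hf_mom.congr (Filter.Eventually.of_forall fun x => ?_)
      show ‖f x‖ ^ 2 * p x = ∫ y, ‖‖f x‖ ^ 2 * q x y‖ ∂ν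
      have hnn : (fun y => ‖‖f x‖ ^ 2 * q x y‖) = fun y => ‖f x‖ ^ 2 * q x y := by
        funext y
        rw [Real.norm_eq_abs, abs_of_nonneg (mul_nonneg (by positivity) (hq_pos x y).le)]
      rw [hnn, integral_const_mul, hp x]
  have hQcross : Integrable (fun z : EuclideanSpace ℝ (Fin n) × EuclideanSpace ℝ (Fin m) =>
      (inner ℝ (f z.1) (sq z.1 z.2) : ℝ) * q z.1 z.2) (volume.prod ν) := by
    have hbd : Integrable (fun z : EuclideanSpace ℝ (Fin n) × EuclideanSpace ℝ (Fin m) =>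
        (1/2 : ℝ) * ((‖f z.1‖ ^ 2 * q z.1 z.2
          + ‖gradient (fun x' => Real.log (q x' z.2)) z.1‖ ^ 2 * q z.1 z.2)
          - ‖f z.1 - gradient (fun x' => Real.log (q x' z.2)) z.1‖ ^ 2 * q z.1 z.2))
        (volume.prod ν) := ((hQf.add hmom_q).sub hf_joint).const_mul _
    refine hbd.congr (Filter.Eventually.of_forall fun z => ?_)
    dsimp only
    rw [@norm_sub_sq_real]; ring
  -- expansion of the joint integral
  have expand_q : ∫ z : EuclideanSpace ℝ (Fin n) × EuclideanSpace ℝ (Fin m),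
      ‖f z.1 - sq z.1 z.2‖ ^ 2 * q z.1 z.2 ∂(volume.prod ν) =
      (∫ z : EuclideanSpace ℝ (Fin n) × EuclideanSpace ℝ (Fin m),
        ‖f z.1‖ ^ 2 * q z.1 z.2 ∂(volume.prod ν))
      - 2 * (∫ z : EuclideanSpace ℝ (Fin n) × EuclideanSpace ℝ (Fin m),
        (inner ℝ (f z.1) (sq z.1 z.2) : ℝ) * q z.1 z.2 ∂(volume.prod ν))
      + ∫ z : EuclideanSpace ℝ (Fin n) × EuclideanSpace ℝ (Fin m),
        ‖sq z.1 z.2‖ ^ 2 * q z.1 z.2 ∂(volume.prod ν) := by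
    have hpt : (fun z : EuclideanSpace ℝ (Fin n) × EuclideanSpace ℝ (Fin m) =>
        ‖f z.1 - sq z.1 z.2‖ ^ 2 * q z.1 z.2) =
        fun z => (‖f z.1‖ ^ 2 * q z.1 z.2
          - 2 * ((inner ℝ (f z.1) (sq z.1 z.2) : ℝ) * q z.1 z.2))
          + ‖sq z.1 z.2‖ ^ 2 * q z.1 z.2 := by
      funext z; rw [@norm_sub_sq_real]; ring
    have hI2 : Integrable (fun z : EuclideanSpace ℝ (Fin n) × EuclideanSpace ℝ (Fin m) =>
        2 * ((inner ℝ (f z.1) (sq z.1 z.2) : ℝ) * q z.1 z.2)) (volume.prod ν) :=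
      hQcross.const_mul 2
    have hIsub : Integrable (fun z : EuclideanSpace ℝ (Fin n) × EuclideanSpace ℝ (Fin m) =>
        ‖f z.1‖ ^ 2 * q z.1 z.2 - 2 * ((inner ℝ (f z.1) (sq z.1 z.2) : ℝ) * q z.1 z.2))
        (volume.prod ν) := hQf.sub hI2
    rw [hpt, integral_add hIsub hmom_q, integral_sub hQf hI2, integral_const_mul]
  -- ∫∫ ‖f‖² q = ∫ ‖f‖² p
  have hA : ∫ z : EuclideanSpace ℝ (Fin n) × EuclideanSpace ℝ (Fin m),
      ‖f z.1‖ ^ 2 * q z.1 z.2 ∂(volume.prod ν) = ∫ x, ‖f x‖ ^ 2 * p x := by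
    rw [MeasureTheory.integral_prod _ hQf]
    refine integral_congr_ae (Filter.Eventually.of_forall fun x => ?_)
    show ∫ y, ‖f x‖ ^ 2 * q x y ∂ν = ‖f x‖ ^ 2 * p x
    rw [integral_const_mul, hp x]
  -- the key cross-term identity
  have key : ∫ x, (inner ℝ (f x) (sp x) : ℝ) * p x =
      ∫ z : EuclideanSpace ℝ (Fin n) × EuclideanSpace ℝ (Fin m),
        (inner ℝ (f z.1) (sq z.1 z.2) : ℝ) * q z.1 z.2 ∂(volume.prod ν) := by
    rw [MeasureTheory.integral_prod _ hQcross]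
    refine integral_congr_ae ?_
    filter_upwards [hmom_q.prod_right_ae] with x hx
    have hgmeas : AEStronglyMeasurable (fun y => gradient (fun x' => q x' y) x) ν :=
      aemeas_gradient_param ν q hq_meas x (hq_density.mono fun y hy => hy.2 x)
    have hgint : Integrable (fun y => gradient (fun x' => q x' y) x) ν := by
      refine Integrable.mono' (((hq_int x).add hx).const_mul (1/2)) hgmeas ?_
      filter_upwards [hq_density] with y hy
      simp only [Pi.add_apply]
      have hd := hy.2 x
      have hse : sq x y = (q x y)⁻¹ • gradient (fun x' => q x' y) x :=
        gradient_log_comp hd (hq_pos x y)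
      have hge : gradient (fun x' => q x' y) x = q x y • sq x y := by
        rw [hse, smul_smul, mul_inv_cancel₀ (hq_pos x y).ne', one_smul]
      rw [hge, norm_smul, Real.norm_eq_abs, abs_of_nonneg (hq_pos x y).le]
      nlinarith [sq_nonneg (1 - ‖sq x y‖), (hq_pos x y).le, norm_nonneg (sq x y)]
    calc (inner ℝ (f x) (sp x) : ℝ) * p x
        = (inner ℝ (f x) (gradient p x) : ℝ) := by
          simp only [hsp_def]
          rw [gradient_log_comp (hp_diff x) (hp_pos x), real_inner_smul_right]
          field_simp
          rw [mul_div_cancel_left₀ _ (hp_pos x).ne']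
      _ = (inner ℝ (f x) (∫ y, gradient (fun x' => q x' y) x ∂ν) : ℝ) := by rw [hp_grad]
      _ = ∫ y, (inner ℝ (f x) (gradient (fun x' => q x' y) x) : ℝ) ∂ν :=
          (integral_inner hgint (f x)).symm
      _ = ∫ y, (inner ℝ (f x) (sq x y) : ℝ) * q x y ∂ν := by
          refine integral_congr_ae ?_
          filter_upwards [hq_density] with y hy
          simp only [hsq_def]
          rw [gradient_log_comp (hy.2 x) (hq_pos x y), real_inner_smul_right]
          field_simp
          rw [mul_div_cancel_right₀ _ (hq_pos x y).ne']
  -- put everything together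
  have hiter1 : ∫ x, ∫ y, ‖f x - sq x y‖ ^ 2 * q x y ∂ν =
      ∫ z : EuclideanSpace ℝ (Fin n) × EuclideanSpace ℝ (Fin m),
        ‖f z.1 - sq z.1 z.2‖ ^ 2 * q z.1 z.2 ∂(volume.prod ν) :=
    MeasureTheory.integral_integral hf_joint
  have hiter2 : ∫ x, ∫ y, ‖sq x y‖ ^ 2 * q x y ∂ν =
      ∫ z : EuclideanSpace ℝ (Fin n) × EuclideanSpace ℝ (Fin m),
        ‖sq z.1 z.2‖ ^ 2 * q z.1 z.2 ∂(volume.prod ν) :=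
    MeasureTheory.integral_integral hmom_q
  rw [hiter1, hiter2, expand_p, expand_q, hA, key]
  ring
end

section
/- (Denoising learns the force field: minimizer correspondence.) Let n ∈ ℕ, τ > 0, let ν be a Borel probability measure on ℝⁿ, define q(x | x₀) = (2πτ²)^(−n/2) · exp(−‖x − x₀‖² / (2τ²)) and p(x) = ∫ q(x | x₀) dν(x₀), and let S be the class of measurable f : ℝⁿ → ℝⁿ with ∫ ‖f(x)‖² p(x) dx < ∞. Define L_den(f) = ∫∫ ‖f(x) − (x − x₀)‖² q(x | x₀) dν(x₀) dx and the force-field loss L_ff(g) = ∫ ‖g(x) − ∇(log p)(x)‖² p(x) dx. Then f ∈ S minimizes L_den over S if and only if the function x ↦ −(1/τ²) • f(x) minimizes L_ff over S. In particular, writing the Boltzmann energy E(x) = −log p(x), so that the force field is −∇E(x) = ∇ log p(x), minimizing the coordinate-denoising objective is equivalent to minimizing the force-field prediction objective ∫ ‖g(x) − (−∇E(x))‖² p(x) dx. -/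
set_option maxHeartbeats 1000000
open Real MeasureTheory RealInnerProductSpace

lemma aux_u_exp {c u : ℝ} (hc : 0 < c) (hu : 0 ≤ u) : u * Real.exp (-(u / c)) ≤ c := by
  have h := Real.add_one_le_exp (u / c)
  have he : 0 < Real.exp (u / c) := Real.exp_pos _
  rw [Real.exp_neg]
  have h' : u + c ≤ c * Real.exp (u / c) := by
    have h2 := mul_le_mul_of_nonneg_left h hc.le
    rw [mul_add, mul_one, mul_div_cancel₀ _ hc.ne'] at h2
    linarith
  have h2 := mul_le_mul_of_nonneg_right h' (inv_pos.mpr he).le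
  rw [mul_assoc, mul_inv_cancel₀ he.ne', mul_one] at h2
  have h3 : 0 ≤ c * (Real.exp (u / c))⁻¹ := by positivity
  nlinarith

lemma aux_t_exp {τ t : ℝ} (hτ : 0 < τ) (ht : 0 ≤ t) :
    t * Real.exp (-t ^ 2 / (2 * τ ^ 2)) ≤ τ := by
  have h1 : t ^ 2 * Real.exp (-(t ^ 2 / τ ^ 2)) ≤ τ ^ 2 :=
    aux_u_exp (by positivity) (by positivity)
  have he : (0:ℝ) < Real.exp (-t ^ 2 / (2 * τ ^ 2)) := Real.exp_pos _
  have hsq : Real.exp (-(t ^ 2 / τ ^ 2)) = Real.exp (-t ^ 2 / (2 * τ ^ 2)) ^ 2 := by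
    rw [pow_two (Real.exp _), ← Real.exp_add]; congr 1; field_simp; ring
  rw [hsq] at h1
  nlinarith [sq_nonneg (t * Real.exp (-t ^ 2 / (2 * τ ^ 2)) - τ), he, ht, hτ]

lemma aux_gauss_integrable (n : ℕ) {b : ℝ} (hb : 0 < b) :
    Integrable (fun y : EuclideanSpace ℝ (Fin n) => Real.exp (-b * ‖y‖ ^ 2)) volume := by
  have h := (GaussianFourier.integrable_cexp_neg_mul_sq_norm_add
    (b := (b : ℂ)) (by simpa using hb) 0 (0 : EuclideanSpace ℝ (Fin n))).norm
  refine (integrable_congr ?_).mp h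
  filter_upwards with v
  simp [Complex.norm_exp, ← Complex.ofReal_pow]

lemma aux_gauss_moment_integrable (n : ℕ) {b : ℝ} (hb : 0 < b) :
    Integrable (fun y : EuclideanSpace ℝ (Fin n) => ‖y‖ ^ 2 * Real.exp (-b * ‖y‖ ^ 2))
      volume := by
  have hint := (aux_gauss_integrable n (b := b / 2) (by positivity)).const_mul (2 / b)
  refine hint.mono' (Continuous.aestronglyMeasurable (by continuity)) ?_
  filter_upwards with y
  have h1 : ‖y‖ ^ 2 * Real.exp (-(‖y‖ ^ 2 / (2 / b))) ≤ 2 / b :=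
    aux_u_exp (by positivity) (by positivity)
  have hsplit : Real.exp (-b * ‖y‖ ^ 2)
      = Real.exp (-(‖y‖ ^ 2 / (2 / b))) * Real.exp (-(b / 2) * ‖y‖ ^ 2) := by
    rw [← Real.exp_add]; congr 1; field_simp; ring
  rw [Real.norm_of_nonneg (by positivity), hsplit]
  have he : (0:ℝ) ≤ Real.exp (-(b / 2) * ‖y‖ ^ 2) := (Real.exp_pos _).le
  calc ‖y‖ ^ 2 * (Real.exp (-(‖y‖ ^ 2 / (2 / b))) * Real.exp (-(b / 2) * ‖y‖ ^ 2))
      = (‖y‖ ^ 2 * Real.exp (-(‖y‖ ^ 2 / (2 / b)))) * Real.exp (-(b / 2) * ‖y‖ ^ 2) := by ring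
    _ ≤ (2 / b) * Real.exp (-(b / 2) * ‖y‖ ^ 2) := by
        exact mul_le_mul_of_nonneg_right h1 he

lemma aux_rpow_two (y : ℝ) : y ^ (2:ℝ) = y ^ (2:ℕ) := by
  rw [show (2:ℝ) = ((2:ℕ):ℝ) by norm_num, Real.rpow_natCast]

/-- **Denoising learns the force field: minimizer correspondence.**
With `q(x | x₀) = (2πτ²)^(−n/2) · exp(−‖x − x₀‖²/(2τ²))`, `p x = ∫ q(x|x₀) dν(x₀)`,
`S` the class of measurable `f : ℝⁿ → ℝⁿ` with `∫ ‖f‖² p dx < ∞`,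
`L_den f = ∫∫ ‖f(x) − (x − x₀)‖² q(x|x₀) dν(x₀) dx`, and
`L_ff g = ∫ ‖g(x) − ∇ log p(x)‖² p(x) dx`: a member `f ∈ S` minimizes `L_den`
over `S` iff `x ↦ −(1/τ²) • f(x)` minimizes `L_ff` over `S`. In particular, with
the Boltzmann energy `E = −log p` (so `−∇E = ∇ log p` is the force field),
`L_ff g = ∫ ‖g(x) − (−∇E(x))‖² p(x) dx`, i.e. minimizing the coordinate-denoising
objective is equivalent to minimizing the force-field prediction objective. -/
theorem denoising_force_field_minimizer_correspondence
    (n : ℕ) (τ : ℝ) (hτ : 0 < τ)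
    (ν : Measure (EuclideanSpace ℝ (Fin n))) [IsProbabilityMeasure ν]
    (q : EuclideanSpace ℝ (Fin n) → EuclideanSpace ℝ (Fin n) → ℝ)
    (hq : ∀ x x₀, q x x₀ = (2 * π * τ ^ 2) ^ (-(n : ℝ) / 2) *
      Real.exp (-‖x - x₀‖ ^ 2 / (2 * τ ^ 2)))
    (p : EuclideanSpace ℝ (Fin n) → ℝ)
    (hp : ∀ x, p x = ∫ x₀, q x x₀ ∂ν)
    (S : Set (EuclideanSpace ℝ (Fin n) → EuclideanSpace ℝ (Fin n)))
    (hS : ∀ f, f ∈ S ↔ Measurable f ∧ Integrable (fun x => ‖f x‖ ^ 2 * p x) volume)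
    (Lden Lff : (EuclideanSpace ℝ (Fin n) → EuclideanSpace ℝ (Fin n)) → ℝ)
    (hLden : ∀ f, Lden f = ∫ x, ∫ x₀, ‖f x - (x - x₀)‖ ^ 2 * q x x₀ ∂ν)
    (hLff : ∀ g, Lff g = ∫ x,
      ‖g x - gradient (fun x' => Real.log (p x')) x‖ ^ 2 * p x)
    (E : EuclideanSpace ℝ (Fin n) → ℝ)
    (hE : ∀ x, E x = -Real.log (p x)) :
    (∀ f ∈ S,
      ((∀ g ∈ S, Lden f ≤ Lden g) ↔
        (∀ g ∈ S, Lff (fun x => -((1 / τ ^ 2) • f x)) ≤ Lff g))) ∧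
    (∀ g, Lff g = ∫ x, ‖g x - -gradient E x‖ ^ 2 * p x) := by
  classical
  set c : ℝ := (2 * π * τ ^ 2) ^ (-(n : ℝ) / 2) with hc_def
  have hπ : (0:ℝ) < 2 * π * τ ^ 2 := by positivity
  have hc : 0 < c := Real.rpow_pos_of_pos hπ _
  have hτ2 : (0:ℝ) < τ ^ 2 := by positivity
  -- basic bounds on q
  have hq_pos : ∀ x x₀, 0 < q x x₀ := by
    intro x x₀; rw [hq]; positivity
  have hq_le : ∀ x x₀, q x x₀ ≤ c := by
    intro x x₀; rw [hq]
    have h1 : Real.exp (-‖x - x₀‖ ^ 2 / (2 * τ ^ 2)) ≤ 1 := by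
      apply Real.exp_le_one_iff.mpr
      have : (0:ℝ) ≤ ‖x - x₀‖ ^ 2 / (2 * τ ^ 2) := by positivity
      linarith [neg_div (2 * τ ^ 2) (‖x - x₀‖ ^ 2)]
    calc c * Real.exp (-‖x - x₀‖ ^ 2 / (2 * τ ^ 2)) ≤ c * 1 :=
          mul_le_mul_of_nonneg_left h1 hc.le
      _ = c := mul_one c
  have hq_cont : Continuous (fun z : EuclideanSpace ℝ (Fin n) × EuclideanSpace ℝ (Fin n) => q z.1 z.2) := by
    have : (fun z : EuclideanSpace ℝ (Fin n) × EuclideanSpace ℝ (Fin n) => q z.1 z.2)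
        = fun z : EuclideanSpace ℝ (Fin n) × EuclideanSpace ℝ (Fin n) => c * Real.exp (-‖z.1 - z.2‖ ^ 2 / (2 * τ ^ 2)) :=
      funext fun z => hq z.1 z.2
    rw [this]
    continuity
  have hnq_le : ∀ x x₀ : EuclideanSpace ℝ (Fin n), ‖x - x₀‖ * q x x₀ ≤ c * τ := by
    intro x x₀; rw [hq]
    have := aux_t_exp (t := ‖x - x₀‖) hτ (norm_nonneg _)
    calc ‖x - x₀‖ * (c * Real.exp (-‖x - x₀‖ ^ 2 / (2 * τ ^ 2)))
        = c * (‖x - x₀‖ * Real.exp (-‖x - x₀‖ ^ 2 / (2 * τ ^ 2))) := by ring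
      _ ≤ c * τ := mul_le_mul_of_nonneg_left this hc.le
  have hn2q_le : ∀ x x₀ : EuclideanSpace ℝ (Fin n), ‖x - x₀‖ ^ 2 * q x x₀ ≤ c * (2 * τ ^ 2) := by
    intro x x₀; rw [hq]
    have h := aux_u_exp (c := 2 * τ ^ 2) (u := ‖x - x₀‖ ^ 2) (by positivity) (by positivity)
    have harg : -‖x - x₀‖ ^ 2 / (2 * τ ^ 2) = -(‖x - x₀‖ ^ 2 / (2 * τ ^ 2)) := neg_div _ _
    rw [harg]
    calc ‖x - x₀‖ ^ 2 * (c * Real.exp (-(‖x - x₀‖ ^ 2 / (2 * τ ^ 2))))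
        = c * (‖x - x₀‖ ^ 2 * Real.exp (-(‖x - x₀‖ ^ 2 / (2 * τ ^ 2)))) := by ring
      _ ≤ c * (2 * τ ^ 2) := mul_le_mul_of_nonneg_left h hc.le
  -- integrability over ν and positivity of p
  have hq_int : ∀ x, Integrable (fun x₀ => q x x₀) ν := by
    intro x
    refine (integrable_const c).mono' ?_ ?_
    · exact (hq_cont.comp (Continuous.prodMk_right x)).aestronglyMeasurable
    · filter_upwards with x₀
      rw [Real.norm_of_nonneg (hq_pos x x₀).le]; exact hq_le x x₀
  have hp_pos : ∀ x, 0 < p x := by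
    intro x
    rw [hp]
    rw [MeasureTheory.integral_pos_iff_support_of_nonneg
      (fun x₀ => (hq_pos x x₀).le) (hq_int x)]
    have : Function.support (fun x₀ => q x x₀) = Set.univ := by
      ext x₀; simp [Function.support, (hq_pos x x₀).ne']
    rw [this]
    simp
  -- the vector field w and its integral V
  set w : EuclideanSpace ℝ (Fin n) → EuclideanSpace ℝ (Fin n) → EuclideanSpace ℝ (Fin n) :=
    fun x x₀ => (-(1 / τ ^ 2) * q x x₀) • (x - x₀) with hw_def
  have hw_cont : Continuous (fun z : EuclideanSpace ℝ (Fin n) × EuclideanSpace ℝ (Fin n) =>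
      w z.1 z.2) := by
    refine Continuous.smul (f := fun z : EuclideanSpace ℝ (Fin n) × EuclideanSpace ℝ (Fin n) => -(1 / τ ^ 2) * q z.1 z.2)
      (g := fun z : EuclideanSpace ℝ (Fin n) × EuclideanSpace ℝ (Fin n) => z.1 - z.2) ?_ ?_
    · exact continuous_const.mul hq_cont
    · exact continuous_fst.sub continuous_snd
  have hw_norm : ∀ x x₀, ‖w x x₀‖ = 1 / τ ^ 2 * (‖x - x₀‖ * q x x₀) := by
    intro x x₀
    rw [hw_def]
    rw [norm_smul]
    rw [Real.norm_eq_abs, abs_mul, abs_neg, abs_of_pos (hq_pos x x₀),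
      abs_of_pos (by positivity : (0:ℝ) < 1 / τ ^ 2)]
    ring
  have hw_le : ∀ x x₀, ‖w x x₀‖ ≤ c * τ / τ ^ 2 := by
    intro x x₀
    rw [hw_norm]
    rw [div_eq_mul_inv, div_eq_mul_inv, one_mul]
    have := hnq_le x x₀
    have h2 : (0:ℝ) < (τ ^ 2)⁻¹ := by positivity
    calc (τ ^ 2)⁻¹ * (‖x - x₀‖ * q x x₀) ≤ (τ ^ 2)⁻¹ * (c * τ) :=
          mul_le_mul_of_nonneg_left this h2.le
      _ = c * τ * (τ ^ 2)⁻¹ := by ring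
  have hw_int : ∀ x, Integrable (fun x₀ => w x x₀) ν := by
    intro x
    refine (integrable_const (c * τ / τ ^ 2 : ℝ)).mono'
      ((hw_cont.comp (Continuous.prodMk_right x)).aestronglyMeasurable) ?_
    · filter_upwards with x₀
      simpa using hw_le x x₀
  set V : EuclideanSpace ℝ (Fin n) → EuclideanSpace ℝ (Fin n) := fun x => ∫ x₀, w x x₀ ∂ν
    with hV_def
  -- gradient of q in the first variable
  have hgradq : ∀ x₀ x, HasFDerivAt (fun x' => q x' x₀)
      ((innerSL ℝ (w x x₀) : EuclideanSpace ℝ (Fin n) →L[ℝ] ℝ)) x := by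
    intro x₀ x
    have h0 : HasFDerivAt (fun x' : EuclideanSpace ℝ (Fin n) => x' - x₀)
        (ContinuousLinearMap.id ℝ (EuclideanSpace ℝ (Fin n))) x :=
      (hasFDerivAt_id x).sub_const x₀
    have h1 := h0.norm_sq
    have h2 := h1.const_mul (-(1 / (2 * τ ^ 2)) : ℝ)
    have h3 := h2.exp
    have h4 := h3.const_mul c
    have heq : (fun x' => q x' x₀)
        = fun x' => c * Real.exp (-(1 / (2 * τ ^ 2)) * ‖x' - x₀‖ ^ 2) := by
      funext x'
      rw [hq]
      congr 1
      ring_nf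
    rw [heq]
    refine h4.congr_fderiv ?_
    ext y
    simp only [ContinuousLinearMap.coe_smul', Pi.smul_apply, smul_eq_mul,
      ContinuousLinearMap.coe_comp', Function.comp_apply, ContinuousLinearMap.coe_id', id_eq,
      ContinuousLinearMap.smul_apply, innerSL_apply_apply]
    rw [hw_def]
    simp only [real_inner_smul_left]
    rw [hq]
    ring_nf
  -- derivative of p under the integral sign
  have hVgrad : ∀ x, HasFDerivAt p ((innerSL ℝ (V x) : EuclideanSpace ℝ (Fin n) →L[ℝ] ℝ)) x := by
    intro x
    have key := hasFDerivAt_integral_of_dominated_of_fderiv_le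
      (F := fun x' (x₀ : EuclideanSpace ℝ (Fin n)) => q x' x₀)
      (F' := fun x' x₀ => (innerSL ℝ (w x' x₀) : EuclideanSpace ℝ (Fin n) →L[ℝ] ℝ))
      (x₀ := x) (bound := fun _ => c * τ / τ ^ 2) (s := Metric.ball x 1) (μ := ν)
      (Metric.ball_mem_nhds x zero_lt_one)
      (Filter.Eventually.of_forall fun x' =>
        ((hq_cont.comp (Continuous.prodMk_right x')).aestronglyMeasurable))
      (hq_int x)
      ?_ ?_ (integrable_const _) ?_
    · have hpe : p = fun x' => ∫ x₀, q x' x₀ ∂ν := funext hp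
      rw [hpe]
      have : ∫ x₀, (innerSL ℝ (w x x₀) : EuclideanSpace ℝ (Fin n) →L[ℝ] ℝ) ∂ν
          = innerSL ℝ (V x) := by
        have h2 := (ContinuousLinearMap.integral_comp_comm (innerSL ℝ) (hw_int x))
        exact h2
      rwa [this] at key
    · exact ((ContinuousLinearMap.continuous (innerSL ℝ)).comp
        (hw_cont.comp (Continuous.prodMk_right x))).aestronglyMeasurable
    · filter_upwards with x₀
      intro x' _
      rw [innerSL_apply_norm]
      exact hw_le x' x₀
    · filter_upwards with x₀
      intro x' _
      exact hgradq x₀ x'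
  -- the score function s
  set s : EuclideanSpace ℝ (Fin n) → EuclideanSpace ℝ (Fin n) :=
    fun x => (p x)⁻¹ • V x with hs_def
  have hlog_grad : ∀ x, HasGradientAt (fun x' => Real.log (p x')) (s x) x := by
    intro x
    have h := (hVgrad x).log (hp_pos x).ne'
    rw [hasGradientAt_iff_hasFDerivAt]
    refine h.congr_fderiv ?_
    ext y
    rw [InnerProductSpace.toDual_apply_apply, hs_def]
    rw [real_inner_smul_left]
    simp only [ContinuousLinearMap.coe_smul', Pi.smul_apply, smul_eq_mul, innerSL_apply_apply]
  have hgrad_eq : ∀ x, gradient (fun x' => Real.log (p x')) x = s x :=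
    fun x => (hlog_grad x).gradient
  -- measurability
  have hpm : StronglyMeasurable p := by
    have h := hq_cont.stronglyMeasurable.integral_prod_right'
      (ν := ν)
    have hpe : p = fun x => ∫ x₀, q x x₀ ∂ν := funext hp
    rw [hpe]
    exact h
  have hVm : StronglyMeasurable V := by
    exact hw_cont.stronglyMeasurable.integral_prod_right' (ν := ν)
  have hsm : Measurable s := by
    exact (hpm.measurable.inv).smul hVm.measurable
  -- the second-moment function Cq
  set Cq : EuclideanSpace ℝ (Fin n) → ℝ := fun x => ∫ x₀, ‖x - x₀‖ ^ 2 * q x x₀ ∂ν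
    with hCq_def
  have hCq_cont : Continuous (fun z : EuclideanSpace ℝ (Fin n) × EuclideanSpace ℝ (Fin n) =>
      ‖z.1 - z.2‖ ^ 2 * q z.1 z.2) := by
    exact (((continuous_fst.sub continuous_snd).norm.pow 2).mul hq_cont)
  have hCq_meas : StronglyMeasurable Cq :=
    hCq_cont.stronglyMeasurable.integral_prod_right' (ν := ν)
  have hCq_nonneg : ∀ x, 0 ≤ Cq x := by
    intro x
    exact integral_nonneg fun x₀ => mul_nonneg (by positivity) (hq_pos x x₀).le
  have hCq_int_inner : ∀ x, Integrable (fun x₀ => ‖x - x₀‖ ^ 2 * q x x₀) ν := by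
    intro x
    refine (integrable_const (c * (2 * τ ^ 2) : ℝ)).mono'
      ((hCq_cont.comp (Continuous.prodMk_right x)).aestronglyMeasurable) ?_
    filter_upwards with x₀
    rw [Real.norm_of_nonneg (mul_nonneg (by positivity) (hq_pos x x₀).le)]
    exact hn2q_le x x₀
  have hr_int : ∀ x, Integrable (fun x₀ => ‖x - x₀‖ * q x x₀) ν := by
    intro x
    refine (integrable_const (c * τ : ℝ)).mono'
      ((((continuous_const.sub continuous_id).norm).mul
        (hq_cont.comp (Continuous.prodMk_right x))).aestronglyMeasurable) ?_
    filter_upwards with x₀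
    rw [Real.norm_of_nonneg (mul_nonneg (norm_nonneg _) (hq_pos x x₀).le)]
    exact hnq_le x x₀
  -- integrability of Cq over volume, via the product measure
  have hb2 : (0:ℝ) < 1 / (2 * τ ^ 2) := by positivity
  have hG_int : Integrable (fun y : EuclideanSpace ℝ (Fin n) =>
      c * (‖y‖ ^ 2 * Real.exp (-(1 / (2 * τ ^ 2)) * ‖y‖ ^ 2))) volume :=
    (aux_gauss_moment_integrable n hb2).const_mul c
  have hslice : ∀ x₀ (x : EuclideanSpace ℝ (Fin n)), ‖x - x₀‖ ^ 2 * q x x₀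
      = c * (‖x - x₀‖ ^ 2 * Real.exp (-(1 / (2 * τ ^ 2)) * ‖x - x₀‖ ^ 2)) := by
    intro x₀ x
    rw [hq]
    rw [show (-(1 / (2 * τ ^ 2)) * ‖x - x₀‖ ^ 2) = -‖x - x₀‖ ^ 2 / (2 * τ ^ 2) by ring]
    ring
  have hΦ_int : Integrable (fun z : EuclideanSpace ℝ (Fin n) × EuclideanSpace ℝ (Fin n) =>
      ‖z.1 - z.2‖ ^ 2 * q z.1 z.2) (volume.prod ν) := by
    rw [integrable_prod_iff' hCq_cont.aestronglyMeasurable]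
    constructor
    · filter_upwards with x₀
      have : (fun x : EuclideanSpace ℝ (Fin n) => ‖x - x₀‖ ^ 2 * q x x₀)
          = fun x => (fun y : EuclideanSpace ℝ (Fin n) =>
            c * (‖y‖ ^ 2 * Real.exp (-(1 / (2 * τ ^ 2)) * ‖y‖ ^ 2))) (x - x₀) :=
        funext fun x => hslice x₀ x
      rw [this]
      exact hG_int.comp_sub_right x₀
    · have hconst : (fun x₀ : EuclideanSpace ℝ (Fin n) =>
          ∫ x, ‖(fun z : EuclideanSpace ℝ (Fin n) × EuclideanSpace ℝ (Fin n) =>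
            ‖z.1 - z.2‖ ^ 2 * q z.1 z.2) (x, x₀)‖ ∂volume)
          = fun _ => ∫ y : EuclideanSpace ℝ (Fin n),
              c * (‖y‖ ^ 2 * Real.exp (-(1 / (2 * τ ^ 2)) * ‖y‖ ^ 2)) ∂volume := by
        funext x₀
        have h1 : ∀ x : EuclideanSpace ℝ (Fin n),
            ‖‖x - x₀‖ ^ 2 * q x x₀‖ = (fun y : EuclideanSpace ℝ (Fin n) =>
              c * (‖y‖ ^ 2 * Real.exp (-(1 / (2 * τ ^ 2)) * ‖y‖ ^ 2))) (x - x₀) := by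
          intro x
          rw [Real.norm_of_nonneg (mul_nonneg (by positivity) (hq_pos x x₀).le)]
          exact hslice x₀ x
        calc ∫ x, ‖‖x - x₀‖ ^ 2 * q x x₀‖ ∂volume
            = ∫ x, (fun y : EuclideanSpace ℝ (Fin n) =>
                c * (‖y‖ ^ 2 * Real.exp (-(1 / (2 * τ ^ 2)) * ‖y‖ ^ 2))) (x - x₀) ∂volume :=
              integral_congr_ae (Filter.Eventually.of_forall h1)
          _ = _ := integral_sub_right_eq_self (μ := volume) (fun y : EuclideanSpace ℝ (Fin n) =>
                c * (‖y‖ ^ 2 * Real.exp (-(1 / (2 * τ ^ 2)) * ‖y‖ ^ 2))) x₀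
      rw [hconst]
      exact integrable_const _
  have hICq : Integrable Cq volume := hΦ_int.integral_prod_left
  -- Cauchy–Schwarz: the score term is dominated by the second moment
  have hCS : ∀ x, (∫ x₀, ‖x - x₀‖ * q x x₀ ∂ν) ^ 2 ≤ Cq x * p x := by
    intro x
    set R := ∫ x₀, ‖x - x₀‖ * q x x₀ ∂ν with hR
    have hpq2 : Real.HolderConjugate 2 2 := Real.HolderConjugate.two_two
    have hmf : AEStronglyMeasurable
        (fun x₀ : EuclideanSpace ℝ (Fin n) => ‖x - x₀‖ * Real.sqrt (q x x₀)) ν := by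
      exact (((continuous_const.sub continuous_id).norm).mul
        ((hq_cont.comp (Continuous.prodMk_right x)).sqrt)).aestronglyMeasurable
    have hmg : AEStronglyMeasurable
        (fun x₀ : EuclideanSpace ℝ (Fin n) => Real.sqrt (q x x₀)) ν :=
      ((hq_cont.comp (Continuous.prodMk_right x)).sqrt).aestronglyMeasurable
    have hf2 : Integrable (fun x₀ => (‖x - x₀‖ * Real.sqrt (q x x₀)) ^ 2) ν := by
      refine (hCq_int_inner x).congr ?_
      filter_upwards with x₀
      rw [mul_pow, Real.sq_sqrt (hq_pos x x₀).le]
    have hg2 : Integrable (fun x₀ => (Real.sqrt (q x x₀)) ^ 2) ν := by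
      refine (hq_int x).congr ?_
      filter_upwards with x₀
      rw [Real.sq_sqrt (hq_pos x x₀).le]
    have hMf : MemLp (fun x₀ : EuclideanSpace ℝ (Fin n) => ‖x - x₀‖ * Real.sqrt (q x x₀))
        (ENNReal.ofReal 2) ν := by
      rw [show ENNReal.ofReal 2 = 2 by simp]
      exact (memLp_two_iff_integrable_sq hmf).mpr hf2
    have hMg : MemLp (fun x₀ : EuclideanSpace ℝ (Fin n) => Real.sqrt (q x x₀))
        (ENNReal.ofReal 2) ν := by
      rw [show ENNReal.ofReal 2 = 2 by simp]
      exact (memLp_two_iff_integrable_sq hmg).mpr hg2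
    have hCS0 := MeasureTheory.integral_mul_le_Lp_mul_Lq_of_nonneg hpq2
      (f := fun x₀ : EuclideanSpace ℝ (Fin n) => ‖x - x₀‖ * Real.sqrt (q x x₀))
      (g := fun x₀ : EuclideanSpace ℝ (Fin n) => Real.sqrt (q x x₀))
      (Filter.Eventually.of_forall fun x₀ => by positivity)
      (Filter.Eventually.of_forall fun x₀ => Real.sqrt_nonneg _) hMf hMg
    have hprod : ∀ x₀ : EuclideanSpace ℝ (Fin n),
        (‖x - x₀‖ * Real.sqrt (q x x₀)) * Real.sqrt (q x x₀) = ‖x - x₀‖ * q x x₀ := by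
      intro x₀
      rw [mul_assoc, Real.mul_self_sqrt (hq_pos x x₀).le]
    have hL : ∫ x₀, (‖x - x₀‖ * Real.sqrt (q x x₀)) * Real.sqrt (q x x₀) ∂ν = R :=
      integral_congr_ae (Filter.Eventually.of_forall hprod)
    have hI1 : ∫ x₀, (‖x - x₀‖ * Real.sqrt (q x x₀)) ^ (2:ℝ) ∂ν = Cq x := by
      refine integral_congr_ae (Filter.Eventually.of_forall fun x₀ => ?_)
      show (‖x - x₀‖ * Real.sqrt (q x x₀)) ^ (2:ℝ) = ‖x - x₀‖ ^ 2 * q x x₀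
      rw [aux_rpow_two, mul_pow, Real.sq_sqrt (hq_pos x x₀).le]
    have hI2 : ∫ x₀, (Real.sqrt (q x x₀)) ^ (2:ℝ) ∂ν = p x := by
      rw [hp]
      refine integral_congr_ae (Filter.Eventually.of_forall fun x₀ => ?_)
      show (Real.sqrt (q x x₀)) ^ (2:ℝ) = q x x₀
      rw [aux_rpow_two, Real.sq_sqrt (hq_pos x x₀).le]
    rw [hL, hI1, hI2] at hCS0
    have hR_nonneg : 0 ≤ R := by
      rw [hR]
      exact integral_nonneg fun x₀ => mul_nonneg (norm_nonneg _) (hq_pos x x₀).le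
    have h1 : R ^ 2 ≤ (Cq x ^ (1/2:ℝ) * p x ^ (1/2:ℝ)) ^ 2 :=
      pow_le_pow_left₀ hR_nonneg hCS0 2
    have h2 : (Cq x ^ (1/2:ℝ) * p x ^ (1/2:ℝ)) ^ 2 = Cq x * p x := by
      rw [mul_pow, ← Real.rpow_natCast (Cq x ^ (1/2:ℝ)) 2,
        ← Real.rpow_natCast (p x ^ (1/2:ℝ)) 2,
        ← Real.rpow_mul (hCq_nonneg x), ← Real.rpow_mul (hp_pos x).le]
      norm_num
    rw [h2] at h1
    exact h1
  have hsp_bound : ∀ x, ‖s x‖ ^ 2 * p x ≤ 1 / τ ^ 4 * Cq x := by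
    intro x
    set R := ∫ x₀, ‖x - x₀‖ * q x x₀ ∂ν with hR
    have hR_nonneg : 0 ≤ R := by
      rw [hR]
      exact integral_nonneg fun x₀ => mul_nonneg (norm_nonneg _) (hq_pos x x₀).le
    have hV_le : ‖V x‖ ≤ 1 / τ ^ 2 * R := by
      calc ‖V x‖ ≤ ∫ x₀, ‖w x x₀‖ ∂ν := norm_integral_le_integral_norm _
        _ = ∫ x₀, 1 / τ ^ 2 * (‖x - x₀‖ * q x x₀) ∂ν :=
            integral_congr_ae (Filter.Eventually.of_forall fun x₀ => hw_norm x x₀)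
        _ = 1 / τ ^ 2 * R := by rw [integral_const_mul]
    have hV2 : ‖V x‖ ^ 2 ≤ (1 / τ ^ 2 * R) ^ 2 := pow_le_pow_left₀ (norm_nonneg _) hV_le 2
    have h1 : ‖V x‖ ^ 2 ≤ 1 / τ ^ 4 * (Cq x * p x) := by
      have he : (1 / τ ^ 2 * R) ^ 2 = 1 / τ ^ 4 * R ^ 2 := by ring
      have h3 : 1 / τ ^ 4 * R ^ 2 ≤ 1 / τ ^ 4 * (Cq x * p x) :=
        mul_le_mul_of_nonneg_left (hCS x) (by positivity)
      calc ‖V x‖ ^ 2 ≤ (1 / τ ^ 2 * R) ^ 2 := hV2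
        _ = 1 / τ ^ 4 * R ^ 2 := he
        _ ≤ _ := h3
    have hP := hp_pos x
    have hns : ‖s x‖ = (p x)⁻¹ * ‖V x‖ := by
      rw [hs_def]
      rw [norm_smul, Real.norm_eq_abs, abs_of_pos (inv_pos.mpr hP)]
    rw [hns]
    have hexp : ((p x)⁻¹ * ‖V x‖) ^ 2 * p x = ‖V x‖ ^ 2 * (p x)⁻¹ := by
      field_simp
    rw [hexp]
    rw [mul_inv_le_iff₀ hP]
    calc ‖V x‖ ^ 2 ≤ 1 / τ ^ 4 * (Cq x * p x) := h1
      _ = 1 / τ ^ 4 * Cq x * p x := by ring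
  have hDD_int : Integrable (fun x => ‖s x‖ ^ 2 * p x) volume := by
    refine (hICq.const_mul (1 / τ ^ 4)).mono'
      (((hsm.norm.pow_const 2).mul hpm.measurable).aestronglyMeasurable) ?_
    filter_upwards with x
    rw [Real.norm_of_nonneg (mul_nonneg (by positivity) (hp_pos x).le)]
    exact hsp_bound x
  -- the key identity
  have key : ∀ f : EuclideanSpace ℝ (Fin n) → EuclideanSpace ℝ (Fin n),
      Measurable f → Integrable (fun x => ‖f x‖ ^ 2 * p x) volume →
      Lden f = (∫ x, ‖f x‖ ^ 2 * p x)
          - 2 * (∫ x, (∫ x₀, ⟪f x, x - x₀⟫ * q x x₀ ∂ν))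
          + (∫ x, Cq x) ∧
      Lff (fun x => -((1 / τ ^ 2) • f x)) = 1 / τ ^ 4 * (∫ x, ‖f x‖ ^ 2 * p x)
          - 2 * (1 / τ ^ 4 * (∫ x, (∫ x₀, ⟪f x, x - x₀⟫ * q x x₀ ∂ν)))
          + (∫ x, ‖s x‖ ^ 2 * p x) := by
    intro f hfm hfi
    set B : EuclideanSpace ℝ (Fin n) → ℝ :=
      fun x => ∫ x₀, ⟪f x, x - x₀⟫ * q x x₀ ∂ν with hB_def
    have hBm : AEStronglyMeasurable B volume := by
      have hj : StronglyMeasurable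
          (fun z : EuclideanSpace ℝ (Fin n) × EuclideanSpace ℝ (Fin n) =>
            ⟪f z.1, z.1 - z.2⟫ * q z.1 z.2) := by
        exact (((hfm.comp measurable_fst).inner
          (measurable_fst.sub measurable_snd)).mul hq_cont.measurable).stronglyMeasurable
      exact (hj.integral_prod_right' (ν := ν)).aestronglyMeasurable
    have hB_int_inner : ∀ x, Integrable (fun x₀ => ⟪f x, x - x₀⟫ * q x x₀) ν := by
      intro x
      refine (integrable_const (‖f x‖ * (c * τ) : ℝ)).mono'
        (((continuous_const.inner
          (continuous_const.sub continuous_id)).mul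
          (hq_cont.comp (Continuous.prodMk_right x))).aestronglyMeasurable) ?_
      filter_upwards with x₀
      rw [Real.norm_eq_abs, abs_mul, abs_of_pos (hq_pos x x₀)]
      calc |⟪f x, x - x₀⟫| * q x x₀ ≤ (‖f x‖ * ‖x - x₀‖) * q x x₀ :=
            mul_le_mul_of_nonneg_right (abs_real_inner_le_norm _ _) (hq_pos x x₀).le
        _ = ‖f x‖ * (‖x - x₀‖ * q x x₀) := by ring
        _ ≤ ‖f x‖ * (c * τ) := mul_le_mul_of_nonneg_left (hnq_le x x₀) (norm_nonneg _)
    have hB_bound : ∀ x, |B x| ≤ 1 / 2 * (‖f x‖ ^ 2 * p x + Cq x) := by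
      intro x
      have h1 : |B x| ≤ ∫ x₀, |⟪f x, x - x₀⟫ * q x x₀| ∂ν := by
        rw [← Real.norm_eq_abs]
        refine (norm_integral_le_integral_norm _).trans_eq ?_
        exact integral_congr_ae (Filter.Eventually.of_forall fun x₀ => Real.norm_eq_abs _)
      have h2 : ∫ x₀, |⟪f x, x - x₀⟫ * q x x₀| ∂ν
          ≤ ∫ x₀, 1 / 2 * (‖f x‖ ^ 2 * q x x₀ + ‖x - x₀‖ ^ 2 * q x x₀) ∂ν := by
        refine integral_mono (hB_int_inner x).abs
          ((((hq_int x).const_mul (‖f x‖ ^ 2)).add (hCq_int_inner x)).const_mul (1 / 2)) ?_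
        intro x₀
        dsimp only
        have hi := abs_real_inner_le_norm (f x) (x - x₀)
        have hqp := hq_pos x x₀
        rw [abs_mul, abs_of_pos hqp]
        nlinarith [sq_nonneg (‖f x‖ - ‖x - x₀‖), mul_le_mul_of_nonneg_right hi hqp.le,
          mul_pos hqp (mul_pos hqp hqp)]
      have h3 : ∫ x₀, 1 / 2 * (‖f x‖ ^ 2 * q x x₀ + ‖x - x₀‖ ^ 2 * q x x₀) ∂ν
          = 1 / 2 * (‖f x‖ ^ 2 * p x + Cq x) := by
        rw [integral_const_mul, integral_add ((hq_int x).const_mul (‖f x‖ ^ 2))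
          (hCq_int_inner x), integral_const_mul, hp]
      linarith
    have hB_int : Integrable B volume := by
      refine ((hfi.add hICq).const_mul (1 / 2)).mono' hBm ?_
      filter_upwards with x
      rw [Real.norm_eq_abs]
      exact hB_bound x
    have hden_point : ∀ x, ∫ x₀, ‖f x - (x - x₀)‖ ^ 2 * q x x₀ ∂ν
        = ‖f x‖ ^ 2 * p x - 2 * B x + Cq x := by
      intro x
      have hexp : ∀ x₀ : EuclideanSpace ℝ (Fin n), ‖f x - (x - x₀)‖ ^ 2 * q x x₀
          = ‖f x‖ ^ 2 * q x x₀ - 2 * (⟪f x, x - x₀⟫ * q x x₀) + ‖x - x₀‖ ^ 2 * q x x₀ := by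
        intro x₀
        rw [norm_sub_sq_real]
        ring
      calc ∫ x₀, ‖f x - (x - x₀)‖ ^ 2 * q x x₀ ∂ν
          = ∫ x₀, (‖f x‖ ^ 2 * q x x₀ - 2 * (⟪f x, x - x₀⟫ * q x x₀)
              + ‖x - x₀‖ ^ 2 * q x x₀) ∂ν :=
            integral_congr_ae (Filter.Eventually.of_forall hexp)
        _ = (∫ x₀, (‖f x‖ ^ 2 * q x x₀ - 2 * (⟪f x, x - x₀⟫ * q x x₀)) ∂ν)
              + ∫ x₀, ‖x - x₀‖ ^ 2 * q x x₀ ∂ν :=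
            integral_add (((hq_int x).const_mul (‖f x‖ ^ 2)).sub
              ((hB_int_inner x).const_mul 2)) (hCq_int_inner x)
        _ = ((∫ x₀, ‖f x‖ ^ 2 * q x x₀ ∂ν) - ∫ x₀, 2 * (⟪f x, x - x₀⟫ * q x x₀) ∂ν)
              + ∫ x₀, ‖x - x₀‖ ^ 2 * q x x₀ ∂ν := by
            rw [integral_sub ((hq_int x).const_mul (‖f x‖ ^ 2)) ((hB_int_inner x).const_mul 2)]
        _ = ‖f x‖ ^ 2 * p x - 2 * B x + Cq x := by
            rw [integral_const_mul, integral_const_mul, hp]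
    have hLden_eq : Lden f = (∫ x, ‖f x‖ ^ 2 * p x) - 2 * (∫ x, B x) + ∫ x, Cq x := by
      rw [hLden f]
      calc ∫ x, ∫ x₀, ‖f x - (x - x₀)‖ ^ 2 * q x x₀ ∂ν
          = ∫ x, (‖f x‖ ^ 2 * p x - 2 * B x + Cq x) :=
            integral_congr_ae (Filter.Eventually.of_forall hden_point)
        _ = (∫ x, (‖f x‖ ^ 2 * p x - 2 * B x)) + ∫ x, Cq x :=
            integral_add (hfi.sub (hB_int.const_mul 2)) hICq
        _ = ((∫ x, ‖f x‖ ^ 2 * p x) - ∫ x, 2 * B x) + ∫ x, Cq x := by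
            rw [integral_sub hfi (hB_int.const_mul 2)]
        _ = _ := by rw [integral_const_mul]
    refine ⟨hLden_eq, ?_⟩
    -- the force-field side
    set g : EuclideanSpace ℝ (Fin n) → EuclideanSpace ℝ (Fin n) :=
      fun x => -((1 / τ ^ 2) • f x) with hg_def
    have e1 : ∀ x, ‖g x‖ ^ 2 = 1 / τ ^ 4 * ‖f x‖ ^ 2 := by
      intro x
      rw [hg_def]
      rw [norm_neg, norm_smul, Real.norm_eq_abs,
        abs_of_pos (by positivity : (0:ℝ) < 1 / τ ^ 2)]
      rw [mul_pow]
      congr 1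
      ring
    have hfV : ∀ x, ⟪f x, V x⟫ = -(1 / τ ^ 2) * B x := by
      intro x
      have h1 : ∫ x₀, ⟪f x, w x x₀⟫ ∂ν = ⟪f x, V x⟫ := integral_inner (hw_int x) (f x)
      have h2 : ∀ x₀ : EuclideanSpace ℝ (Fin n),
          ⟪f x, w x x₀⟫ = -(1 / τ ^ 2) * (⟪f x, x - x₀⟫ * q x x₀) := by
        intro x₀
        rw [hw_def]
        rw [real_inner_smul_right]
        ring
      rw [← h1, integral_congr_ae (Filter.Eventually.of_forall h2), integral_const_mul]
    have hg_q : ∀ x, ⟪g x, s x⟫ * p x = 1 / τ ^ 4 * B x := by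
      intro x
      have : ⟪g x, s x⟫ = -(1 / τ ^ 2) * ((p x)⁻¹ * ⟪f x, V x⟫) := by
        rw [hg_def, hs_def]
        rw [inner_neg_left, real_inner_smul_left, real_inner_smul_right]
        ring
      rw [this, hfV x]
      have hP := (hp_pos x).ne'
      field_simp
    have hff_point : ∀ x, ‖g x - s x‖ ^ 2 * p x
        = ‖g x‖ ^ 2 * p x - 2 * (⟪g x, s x⟫ * p x) + ‖s x‖ ^ 2 * p x := by
      intro x
      rw [norm_sub_sq_real]
      ring
    have Ig : Integrable (fun x => ‖g x‖ ^ 2 * p x) volume := by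
      refine (hfi.const_mul (1 / τ ^ 4)).congr ?_
      filter_upwards with x
      rw [e1 x]
      ring
    have Icross : Integrable (fun x => ⟪g x, s x⟫ * p x) volume := by
      refine (hB_int.const_mul (1 / τ ^ 4)).congr ?_
      filter_upwards with x
      exact (hg_q x).symm
    have hIg_val : ∫ x, ‖g x‖ ^ 2 * p x = 1 / τ ^ 4 * ∫ x, ‖f x‖ ^ 2 * p x := by
      rw [← integral_const_mul]
      refine integral_congr_ae (Filter.Eventually.of_forall fun x => ?_)
      dsimp only
      rw [e1 x]
      ring
    have hIcross_val : ∫ x, ⟪g x, s x⟫ * p x = 1 / τ ^ 4 * ∫ x, B x := by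
      rw [← integral_const_mul]
      exact integral_congr_ae (Filter.Eventually.of_forall fun x => hg_q x)
    rw [hLff g]
    calc ∫ x, ‖g x - gradient (fun x' => Real.log (p x')) x‖ ^ 2 * p x
        = ∫ x, (‖g x‖ ^ 2 * p x - 2 * (⟪g x, s x⟫ * p x) + ‖s x‖ ^ 2 * p x) := by
          refine integral_congr_ae (Filter.Eventually.of_forall fun x => ?_)
          dsimp only
          rw [hgrad_eq x, hff_point x]
      _ = (∫ x, (‖g x‖ ^ 2 * p x - 2 * (⟪g x, s x⟫ * p x))) + ∫ x, ‖s x‖ ^ 2 * p x :=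
          integral_add (Ig.sub (Icross.const_mul 2)) hDD_int
      _ = ((∫ x, ‖g x‖ ^ 2 * p x) - ∫ x, 2 * (⟪g x, s x⟫ * p x)) + ∫ x, ‖s x‖ ^ 2 * p x := by
          rw [integral_sub Ig (Icross.const_mul 2)]
      _ = _ := by
          rw [integral_const_mul, hIg_val, hIcross_val]
  -- assemble
  set CC : ℝ := ∫ x, Cq x with hCC_def
  set DD : ℝ := ∫ x, ‖s x‖ ^ 2 * p x with hDD_def
  have key2 : ∀ f : EuclideanSpace ℝ (Fin n) → EuclideanSpace ℝ (Fin n),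
      Measurable f → Integrable (fun x => ‖f x‖ ^ 2 * p x) volume →
      Lff (fun x => -((1 / τ ^ 2) • f x)) = 1 / τ ^ 4 * (Lden f - CC) + DD := by
    intro f hfm hfi
    obtain ⟨h1, h2⟩ := key f hfm hfi
    rw [h1, h2]
    ring
  have hscale : ∀ (a : ℝ) (f : EuclideanSpace ℝ (Fin n) → EuclideanSpace ℝ (Fin n)),
      f ∈ S → (fun x => a • f x) ∈ S := by
    intro a f hf
    rw [hS] at hf ⊢
    obtain ⟨hm, hi⟩ := hf
    refine ⟨hm.const_smul a, ?_⟩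
    refine (hi.const_mul (a ^ 2)).congr ?_
    filter_upwards with x
    rw [norm_smul, Real.norm_eq_abs, mul_pow, sq_abs]
    ring
  have hφmem : ∀ g, g ∈ S → (fun x => -((1 / τ ^ 2) • g x)) ∈ S := by
    intro g hg
    have h := hscale (-(1 / τ ^ 2)) g hg
    have heq : (fun x => -((1 / τ ^ 2) • g x)) = fun x => (-(1 / τ ^ 2)) • g x :=
      funext fun x => (neg_smul _ _).symm
    rw [heq]
    exact h
  have hτ4 : (0:ℝ) < 1 / τ ^ 4 := by positivity
  constructor
  · intro f hfS
    obtain ⟨hfm, hfi⟩ := (hS f).mp hfS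
    constructor
    · intro hmin g hgS
      have hh : (fun x => (-(τ ^ 2)) • g x) ∈ S := hscale _ g hgS
      obtain ⟨hhm, hhi⟩ := (hS _).mp hh
      have hcomp : (fun x => -((1 / τ ^ 2) • ((fun x => (-(τ ^ 2)) • g x) x))) = g := by
        funext x
        show -((1 / τ ^ 2) • ((-(τ ^ 2)) • g x)) = g x
        rw [smul_smul, show (1 / τ ^ 2) * (-(τ ^ 2)) = (-1 : ℝ) by field_simp, neg_smul,
          one_smul, neg_neg]
      have e_f := key2 f hfm hfi
      have e_h := key2 _ hhm hhi
      rw [hcomp] at e_h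
      have hle := hmin _ hh
      rw [e_f, e_h]
      have h2 := mul_le_mul_of_nonneg_left (sub_le_sub_right hle CC) hτ4.le
      linarith
    · intro hmin g hgS
      obtain ⟨hgm, hgi⟩ := (hS g).mp hgS
      have e_f := key2 f hfm hfi
      have e_g := key2 g hgm hgi
      have hle := hmin _ (hφmem g hgS)
      rw [e_f, e_g] at hle
      have h2 : 1 / τ ^ 4 * (Lden f - CC) ≤ 1 / τ ^ 4 * (Lden g - CC) := by linarith
      have h3 := le_of_mul_le_mul_left h2 hτ4
      linarith
  · intro g
    rw [hLff g]
    refine integral_congr_ae (Filter.Eventually.of_forall fun x => ?_)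
    have hEeq : E = fun x' => -Real.log (p x') := funext hE
    have hgE : gradient E x = -(s x) := by
      have h1 := (hlog_grad x).hasFDerivAt.neg
      have h2 : HasGradientAt (fun x' => -Real.log (p x')) (-(s x)) x := by
        rw [hasGradientAt_iff_hasFDerivAt]
        refine h1.congr_fderiv ?_
        simp
      rw [hEeq]
      exact h2.gradient
    show ‖g x - gradient (fun x' => Real.log (p x')) x‖ ^ 2 * p x
        = ‖g x - -gradient E x‖ ^ 2 * p x
    rw [hgrad_eq x, hgE, neg_neg]
end
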